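/- Let B̄ be a smooth affine algebra over a perfect field k of characteristic p > 0, B† its Monsky–Washnitzer algebra, t_F: B† → W†(B̄) the overconvergent Witt lift attached to a Frobenius lift F on B†, and (Ẽ, ∇̃) a free B†-module with an integrable connection ∇̃: Ẽ → Ẽ ⊗_{B†} Ω¹_{B†/W(k)}. Then the map ∇: E → E ⊗_{W†(B̄)} W†Ω¹_{B̄/k} on E := Ẽ ⊗_{t_F} W†(B̄), defined as the composition of ∇̃ ⊗ id + id ⊗ d with the map induced by id ⊗ t_F ⊕ id, satisfies the Leibniz rule and is integrable, i.e. ∇² = 0; in other words (E, ∇) is an integrable overconvergent de Rham–Witt connection. -/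
import Mathlib


/-!
# Statement 1

Let `B̄` be a smooth affine algebra over a perfect field `k` of characteristic `p > 0`,
`B†` its Monsky–Washnitzer algebra, `t_F : B† → W†(B̄)` the overconvergent Witt lift
attached to a Frobenius lift `F` on `B†`, and `(Ẽ, ∇̃)` a free `B†`-module with an
integrable connection `∇̃ : Ẽ → Ẽ ⊗ Ω¹_{B†/W(k)}`.  Then the map
`∇ : E → E ⊗ W†Ω¹_{B̄/k}` on `E := Ẽ ⊗_{t_F} W†(B̄)`, defined as the composition of
`∇̃ ⊗ id + id ⊗ d` with the map induced by `id ⊗ t_F ⊕ id`, satisfies the Leibniz rule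
and is integrable (`∇² = 0`); i.e. `(E, ∇)` is an integrable overconvergent
de Rham–Witt connection.

The complexes `Ω_{B†/W(k)}` and `W†Ω_{B̄/k}` are modelled (in the degrees ≤ 2 relevant
for integrability) as truncated commutative differential graded algebras `DGA2`, the map
`t_F` on differential forms as a morphism `DGA2Hom` of such semilinear over the ring map
`t_F = algebraMap B† W†(B̄)`, which is tied to the genuine Witt vector operations of
Mathlib (`W†(B̄)` comes with an injective ring map `ι` to `W(B̄) = WittVector p B̄`,
`t_F` lifts the reduction `B† → B̄` in the 0-th Witt coordinate and intertwines the
Frobenius lift `F` with the Witt vector Frobenius).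
-/

open TensorProduct

/-- A (degrees ≤ 2) truncation of a commutative differential graded `R`-algebra:
an `R`-algebra `A` in degree zero, modules `Ω1`, `Ω2` of one- and two-forms,
differentials `d0`, `d1`, and a wedge product, satisfying the Leibniz rules. -/
structure DGA2 (R : Type) [CommRing R] (A : Type) [CommRing A] [Algebra R A] where
  Ω1 : Type
  Ω2 : Type
  [acg1 : AddCommGroup Ω1]
  [acg2 : AddCommGroup Ω2]
  [mod1 : Module A Ω1]
  [mod2 : Module A Ω2]
  d0 : A →+ Ω1
  d1 : Ω1 →+ Ω2
  wedge : Ω1 →ₗ[A] Ω1 →ₗ[A] Ω2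
  d0_algebraMap : ∀ r : R, d0 (algebraMap R A r) = 0
  d0_mul : ∀ a b : A, d0 (a * b) = a • d0 b + b • d0 a
  d1_smul : ∀ (a : A) (ω : Ω1), d1 (a • ω) = wedge (d0 a) ω + a • d1 ω
  d1_d0 : ∀ a : A, d1 (d0 a) = 0

attribute [instance] DGA2.acg1 DGA2.acg2 DGA2.mod1 DGA2.mod2

/-- A connection `∇ : E → E ⊗ Ω¹` (additive, satisfying the Leibniz rule). -/
structure Conn2 {R : Type} [CommRing R] {A : Type} [CommRing A] [Algebra R A]
    (D : DGA2 R A) (E : Type) [AddCommGroup E] [Module A E] where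
  nabla : E →+ E ⊗[A] D.Ω1
  leibniz : ∀ (a : A) (e : E), nabla (a • e) = a • nabla e + e ⊗ₜ[A] D.d0 a

namespace Conn2

variable {R : Type} [CommRing R] {A : Type} [CommRing A] [Algebra R A]
  {D : DGA2 R A} {E : Type} [AddCommGroup E] [Module A E] (c : Conn2 D E)

/-- The extension `∇¹ : E ⊗ Ω¹ → E ⊗ Ω²`, `e ⊗ ω ↦ ∇e ∧ ω + e ⊗ d ω`. -/
noncomputable def nabla1 : E ⊗[A] D.Ω1 →+ E ⊗[A] D.Ω2 :=
  TensorProduct.liftAddHom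
    { toFun := fun e =>
        { toFun := fun ω =>
            (LinearMap.lTensor E (D.wedge.flip ω)) (c.nabla e) + e ⊗ₜ[A] D.d1 ω
          map_zero' := by simp
          map_add' := by
            intro ω ω'
            simp only [map_add, LinearMap.lTensor_add, LinearMap.add_apply,
              TensorProduct.tmul_add]
            abel }
      map_zero' := by
        ext ω
        simp
      map_add' := by
        intro e e'
        ext ω
        simp only [AddMonoidHom.coe_mk, ZeroHom.coe_mk, map_add, AddMonoidHom.add_apply,
          TensorProduct.add_tmul]
        abel }
    (by
      intro a e ω
      simp only [AddMonoidHom.coe_mk, ZeroHom.coe_mk]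
      rw [c.leibniz, map_add, map_smul, D.d1_smul]
      rw [show (LinearMap.lTensor E (D.wedge.flip ω)) (e ⊗ₜ[A] D.d0 a)
            = e ⊗ₜ[A] D.wedge (D.d0 a) ω from by simp [LinearMap.lTensor_tmul]]
      rw [show D.wedge.flip (a • ω) = a • D.wedge.flip ω from by simp [map_smul]]
      rw [LinearMap.lTensor_smul, LinearMap.smul_apply]
      simp only [TensorProduct.tmul_add, TensorProduct.tmul_smul,
        TensorProduct.smul_tmul']
      abel)

/-- Integrability `∇² = 0` of a connection. -/
def IsIntegrable : Prop := ∀ e : E, c.nabla1 (c.nabla e) = 0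

end Conn2

/-- A morphism of truncated differential graded algebras, semilinear over a ring
homomorphism `f : A → B` of the degree-zero parts (e.g. the comparison map `t_F` from
Monsky–Washnitzer differential forms to the overconvergent de Rham–Witt complex). -/
structure DGA2Hom {R : Type} [CommRing R] {A B : Type} [CommRing A] [CommRing B]
    [Algebra R A] [Algebra R B] (D : DGA2 R A) (D' : DGA2 R B) (f : A →+* B) where
  f1 : D.Ω1 →+ D'.Ω1
  f2 : D.Ω2 →+ D'.Ω2
  f1_smul : ∀ (a : A) (ω : D.Ω1), f1 (a • ω) = f a • f1 ω
  f2_smul : ∀ (a : A) (η : D.Ω2), f2 (a • η) = f a • f2 η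
  comm_d0 : ∀ a : A, f1 (D.d0 a) = D'.d0 (f a)
  comm_d1 : ∀ ω : D.Ω1, f2 (D.d1 ω) = D'.d1 (f1 ω)
  comm_wedge : ∀ ω ω' : D.Ω1, f2 (D.wedge ω ω') = D'.wedge (f1 ω) (f1 ω')

/-- The map `Ẽ ⊗_{B†} Ω¹_{B†/W(k)} → (E ⊗_{W†(B̄)} W†Ω¹_{B̄/k})`,
`e ⊗ ω ↦ (1 ⊗ e) ⊗ t_F(ω)`, on `E = W†(B̄) ⊗_{t_F} Ẽ`. -/
noncomputable def baseChangeForms {R : Type} [CommRing R] {A B : Type} [CommRing A]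
    [CommRing B] [Algebra R A] [Algebra R B] [Algebra A B] {D : DGA2 R A} {D' : DGA2 R B}
    (φ : DGA2Hom D D' (algebraMap A B)) (E : Type) [AddCommGroup E] [Module A E] :
    E ⊗[A] D.Ω1 →+ (B ⊗[A] E) ⊗[B] D'.Ω1 :=
  TensorProduct.liftAddHom
    { toFun := fun e =>
        { toFun := fun ω => ((1 : B) ⊗ₜ[A] e) ⊗ₜ[B] φ.f1 ω
          map_zero' := by simp
          map_add' := by intro ω ω'; simp [map_add, TensorProduct.tmul_add]
        }
      map_zero' := by ext ω; simp
      map_add' := by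
        intro e e'
        ext ω
        simp [TensorProduct.tmul_add, TensorProduct.add_tmul] }
    (by
      intro a e ω
      simp only [AddMonoidHom.coe_mk, ZeroHom.coe_mk]
      rw [φ.f1_smul, TensorProduct.tmul_smul, ← algebraMap_smul B a ((1 : B) ⊗ₜ[A] e),
        TensorProduct.smul_tmul])

/-- Computation of `nabla1` on elementary tensors. -/
theorem Conn2.nabla1_tmul {R : Type} [CommRing R] {A : Type} [CommRing A] [Algebra R A]
    {D : DGA2 R A} {E : Type} [AddCommGroup E] [Module A E] (c : Conn2 D E)
    (e : E) (ω : D.Ω1) :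
    c.nabla1 (e ⊗ₜ[A] ω)
      = (LinearMap.lTensor E (D.wedge.flip ω)) (c.nabla e) + e ⊗ₜ[A] D.d1 ω := by
  simp only [Conn2.nabla1, TensorProduct.liftAddHom_tmul, AddMonoidHom.coe_mk,
    ZeroHom.coe_mk]

/-- Base change on two-forms, `e ⊗ η ↦ (1 ⊗ e) ⊗ f2 η`. -/
noncomputable def baseChangeForms2 {R : Type} [CommRing R] {A B : Type} [CommRing A]
    [CommRing B] [Algebra R A] [Algebra R B] [Algebra A B] {D : DGA2 R A} {D' : DGA2 R B}
    (φ : DGA2Hom D D' (algebraMap A B)) (E : Type) [AddCommGroup E] [Module A E] :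
    E ⊗[A] D.Ω2 →+ (B ⊗[A] E) ⊗[B] D'.Ω2 :=
  TensorProduct.liftAddHom
    { toFun := fun e =>
        { toFun := fun η => ((1 : B) ⊗ₜ[A] e) ⊗ₜ[B] φ.f2 η
          map_zero' := by simp
          map_add' := by intro η η'; simp [TensorProduct.tmul_add] }
      map_zero' := by ext η; simp
      map_add' := by
        intro e e'
        ext η
        simp [TensorProduct.tmul_add, TensorProduct.add_tmul] }
    (by
      intro a e η
      simp only [AddMonoidHom.coe_mk, ZeroHom.coe_mk]
      rw [φ.f2_smul, TensorProduct.tmul_smul, ← algebraMap_smul B a ((1 : B) ⊗ₜ[A] e),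
        TensorProduct.smul_tmul])

theorem statement1
    -- a perfect field k of characteristic p > 0
    (p : ℕ) [Fact p.Prime] (k : Type) [Field k] [CharP k p] [PerfectRing k p]
    -- B̄, a smooth affine k-algebra
    (Bbar : Type) [CommRing Bbar] [Algebra k Bbar]
    (hsmooth : Algebra.Smooth k Bbar)
    -- B†, the Monsky–Washnitzer algebra: a p-torsion free W(k)-algebra with B†/pB† = B̄
    (Bdag : Type) [CommRing Bdag] [Algebra (WittVector p k) Bdag]
    (red : Bdag →+* Bbar) (hred : Function.Surjective red)
    (hker : RingHom.ker red = Ideal.span {(p : Bdag)})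
    (htf : ∀ x : Bdag, (p : Bdag) * x = 0 → x = 0)
    -- W†(B̄), the ring of overconvergent Witt vectors, a subring of W(B̄)
    (Wdag : Type) [CommRing Wdag] [Algebra (WittVector p k) Wdag]
    (ι : Wdag →+* WittVector p Bbar) (hι : Function.Injective ι)
    (hιW : ∀ c : WittVector p k,
      ι (algebraMap (WittVector p k) Wdag c) = WittVector.map (algebraMap k Bbar) c)
    -- a Frobenius lift F on B†
    (F : Bdag →+* Bdag) (hF : ∀ b, red (F b) = red b ^ p)
    -- the overconvergent Witt lift t_F : B† → W†(B̄) attached to F, realised as the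
    -- structure map of an algebra structure; it lifts `red` in the 0-th Witt coordinate
    -- and intertwines F with the Witt vector Frobenius
    [Algebra Bdag Wdag]
    (htF0 : ∀ b : Bdag, (ι (algebraMap Bdag Wdag b)).coeff 0 = red b)
    (htFF : ∀ b : Bdag, ι (algebraMap Bdag Wdag (F b))
            = WittVector.frobenius (ι (algebraMap Bdag Wdag b)))
    -- the complex Ω_{B†/W(k)} of continuous differentials (in degrees ≤ 2), with
    -- Ω¹ generated by the image of d
    (DΩ : DGA2 (WittVector p k) Bdag)
    (hgen : Submodule.span Bdag (Set.range DΩ.d0) = ⊤)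
    -- the overconvergent de Rham–Witt complex W†Ω_{B̄/k} (in degrees ≤ 2)
    (DW : DGA2 (WittVector p k) Wdag)
    -- the comparison map t_F : Ω_{B†/W(k)} → W†Ω_{B̄/k} on differential forms
    (tF : DGA2Hom DΩ DW (algebraMap Bdag Wdag))
    -- (Ẽ, ∇̃): a free B†-module with integrable connection
    (E : Type) [AddCommGroup E] [Module Bdag E] (hfree : Module.Free Bdag E)
    (nt : Conn2 DΩ E) (hint : nt.IsIntegrable) :
    -- conclusion: the composite map ∇ on E ⊗_{t_F} W†(B̄) (given on elementary tensors by
    -- the stated formula) satisfies the Leibniz rule, i.e. is a connection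
    -- with values in W†Ω¹_{B̄/k}, and is integrable
    ∃ C : Conn2 DW (Wdag ⊗[Bdag] E),
      (∀ (w : Wdag) (e : E),
        C.nabla (w ⊗ₜ[Bdag] e)
          = w • baseChangeForms tF E (nt.nabla e)
            + ((1 : Wdag) ⊗ₜ[Bdag] e) ⊗ₜ[Wdag] DW.d0 w)
      ∧ C.IsIntegrable := by
  classical
  have bc1_tmul : ∀ (e : E) (ω : DΩ.Ω1),
      baseChangeForms tF E (e ⊗ₜ[Bdag] ω)
        = ((1 : Wdag) ⊗ₜ[Bdag] e) ⊗ₜ[Wdag] tF.f1 ω := by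
    intro e ω
    simp only [baseChangeForms, TensorProduct.liftAddHom_tmul, AddMonoidHom.coe_mk,
      ZeroHom.coe_mk]
  have bc2_tmul : ∀ (e : E) (η : DΩ.Ω2),
      baseChangeForms2 tF E (e ⊗ₜ[Bdag] η)
        = ((1 : Wdag) ⊗ₜ[Bdag] e) ⊗ₜ[Wdag] tF.f2 η := by
    intro e η
    simp only [baseChangeForms2, TensorProduct.liftAddHom_tmul, AddMonoidHom.coe_mk,
      ZeroHom.coe_mk]
  have bc1_smul : ∀ (a : Bdag) (t : E ⊗[Bdag] DΩ.Ω1),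
      baseChangeForms tF E (a • t) = algebraMap Bdag Wdag a • baseChangeForms tF E t := by
    intro a t
    induction t using TensorProduct.induction_on with
    | zero => simp
    | tmul e ω =>
        rw [show a • (e ⊗ₜ[Bdag] ω) = e ⊗ₜ[Bdag] (a • ω) from
            (TensorProduct.tmul_smul a e ω).symm,
          bc1_tmul, bc1_tmul, tF.f1_smul, TensorProduct.tmul_smul]
    | add x y hx hy => rw [smul_add, map_add, map_add, hx, hy, smul_add]
  -- antisymmetry of the wedge product on exact one-forms
  have hanti : ∀ a b : Wdag,
      DW.wedge (DW.d0 a) (DW.d0 b) + DW.wedge (DW.d0 b) (DW.d0 a) = 0 := by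
    intro a b
    have h := congrArg DW.d1 (DW.d0_mul a b)
    rw [DW.d1_d0, map_add, DW.d1_smul, DW.d1_smul, DW.d1_d0, DW.d1_d0, smul_zero,
      smul_zero, add_zero, add_zero] at h
    exact h.symm
  have hK : ∀ (w : Wdag) (η : DW.Ω1), η ∈ Submodule.span Wdag (Set.range DW.d0) →
      DW.wedge (DW.d0 w) η + DW.wedge η (DW.d0 w) = 0 := by
    intro w η hη
    induction hη using Submodule.span_induction with
    | mem x hx =>
        obtain ⟨u, rfl⟩ := hx
        exact hanti w u
    | zero => simp
    | add x y _ _ hx hy =>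
        have h : DW.wedge (DW.d0 w) (x + y) + DW.wedge (x + y) (DW.d0 w)
            = (DW.wedge (DW.d0 w) x + DW.wedge x (DW.d0 w))
              + (DW.wedge (DW.d0 w) y + DW.wedge y (DW.d0 w)) := by
          simp only [map_add, LinearMap.add_apply]
          abel
        rw [h, hx, hy, add_zero]
    | smul c x _ hx =>
        rw [map_smul, map_smul, LinearMap.smul_apply, ← smul_add, hx, smul_zero]
  have hmem : ∀ ω : DΩ.Ω1, tF.f1 ω ∈ Submodule.span Wdag (Set.range DW.d0) := by
    intro ω
    have hω : ω ∈ Submodule.span Bdag (Set.range DΩ.d0) := hgen ▸ Submodule.mem_top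
    induction hω using Submodule.span_induction with
    | mem x hx =>
        obtain ⟨b, rfl⟩ := hx
        rw [tF.comm_d0]
        exact Submodule.subset_span ⟨_, rfl⟩
    | zero => rw [map_zero]; exact Submodule.zero_mem _
    | add x y _ _ hx hy => rw [map_add]; exact Submodule.add_mem _ hx hy
    | smul a x _ hx => rw [tF.f1_smul]; exact Submodule.smul_mem _ _ hx
  -- construction of the connection on the base change
  obtain ⟨nab, nab_tmul⟩ :
      ∃ nab : Wdag ⊗[Bdag] E →+ (Wdag ⊗[Bdag] E) ⊗[Wdag] DW.Ω1,
        ∀ (w : Wdag) (e : E), nab (w ⊗ₜ[Bdag] e)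
          = w • baseChangeForms tF E (nt.nabla e)
            + ((1 : Wdag) ⊗ₜ[Bdag] e) ⊗ₜ[Wdag] DW.d0 w := by
    refine ⟨TensorProduct.liftAddHom
      { toFun := fun w =>
          { toFun := fun e => w • baseChangeForms tF E (nt.nabla e)
              + ((1 : Wdag) ⊗ₜ[Bdag] e) ⊗ₜ[Wdag] DW.d0 w
            map_zero' := by simp
            map_add' := by
              intro e e'
              simp only [map_add, smul_add, TensorProduct.tmul_add,
                TensorProduct.add_tmul]
              abel }
        map_zero' := by
          ext e
          simp
        map_add' := by
          intro w w'
          ext e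
          simp only [AddMonoidHom.coe_mk, ZeroHom.coe_mk, add_smul, map_add,
            TensorProduct.tmul_add, AddMonoidHom.add_apply]
          abel }
      ?_, fun w e => ?_⟩
    · intro a w e
      simp only [AddMonoidHom.coe_mk, ZeroHom.coe_mk]
      rw [nt.leibniz, map_add, bc1_smul, bc1_tmul, tF.comm_d0, Algebra.smul_def,
        DW.d0_mul, TensorProduct.tmul_add, smul_add, smul_smul,
        TensorProduct.tmul_smul a ((1 : Wdag)) e,
        ← algebraMap_smul Wdag a ((1 : Wdag) ⊗ₜ[Bdag] e)]
      simp only [TensorProduct.tmul_smul, ← TensorProduct.smul_tmul']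
      rw [mul_comm w (algebraMap Bdag Wdag a)]
      abel
    · simp only [TensorProduct.liftAddHom_tmul, AddMonoidHom.coe_mk, ZeroHom.coe_mk]
  have nab_leib : ∀ (u : Wdag) (x : Wdag ⊗[Bdag] E),
      nab (u • x) = u • nab x + x ⊗ₜ[Wdag] DW.d0 u := by
    intro u x
    induction x using TensorProduct.induction_on with
    | zero => simp
    | tmul w e =>
        rw [TensorProduct.smul_tmul', nab_tmul, nab_tmul, smul_eq_mul, DW.d0_mul,
          TensorProduct.tmul_add, smul_add, smul_smul,
          show (w ⊗ₜ[Bdag] e) = w • ((1 : Wdag) ⊗ₜ[Bdag] e) from by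
            rw [TensorProduct.smul_tmul', smul_eq_mul, mul_one]]
        simp only [TensorProduct.tmul_smul, ← TensorProduct.smul_tmul']
        abel
    | add x y hx hy =>
        rw [smul_add, map_add, hx, hy, map_add, smul_add, TensorProduct.add_tmul]
        abel
  set C : Conn2 DW (Wdag ⊗[Bdag] E) := ⟨nab, nab_leib⟩ with hCdef
  have hnab : C.nabla = nab := by rw [hCdef]
  have hC1 : ∀ e : E, nab ((1 : Wdag) ⊗ₜ[Bdag] e)
      = baseChangeForms tF E (nt.nabla e) := by
    intro e
    have h1 : DW.d0 (1 : Wdag) = 0 := by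
      rw [← map_one (algebraMap (WittVector p k) Wdag)]
      exact DW.d0_algebraMap 1
    rw [nab_tmul, one_smul, h1, TensorProduct.tmul_zero, add_zero]
  have hn1smul : ∀ (w : Wdag) (y : (Wdag ⊗[Bdag] E) ⊗[Wdag] DW.Ω1),
      C.nabla1 (w • y) = w • C.nabla1 y
        + LinearMap.lTensor (Wdag ⊗[Bdag] E) (DW.wedge (DW.d0 w)) y := by
    intro w y
    induction y using TensorProduct.induction_on with
    | zero => simp
    | tmul x ω =>
        rw [← TensorProduct.tmul_smul, Conn2.nabla1_tmul, Conn2.nabla1_tmul,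
          map_smul, LinearMap.lTensor_smul, LinearMap.smul_apply, DW.d1_smul,
          LinearMap.lTensor_tmul, TensorProduct.tmul_add, smul_add]
        simp only [← TensorProduct.tmul_smul]
        abel
    | add x y hx hy =>
        rw [smul_add, map_add, hx, hy, map_add, map_add, smul_add]
        abel
  have hLw : ∀ (ω : DΩ.Ω1) (s : E ⊗[Bdag] DΩ.Ω1),
      LinearMap.lTensor (Wdag ⊗[Bdag] E) (DW.wedge.flip (tF.f1 ω))
          (baseChangeForms tF E s)
        = baseChangeForms2 tF E (LinearMap.lTensor E (DΩ.wedge.flip ω) s) := by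
    intro ω s
    induction s using TensorProduct.induction_on with
    | zero => simp
    | tmul e' ω' =>
        rw [bc1_tmul, LinearMap.lTensor_tmul, LinearMap.lTensor_tmul, bc2_tmul,
          LinearMap.flip_apply, LinearMap.flip_apply, tF.comm_wedge]
    | add x y hx hy => rw [map_add, map_add, map_add, map_add, hx, hy]
  have hL3 : ∀ s : E ⊗[Bdag] DΩ.Ω1,
      C.nabla1 (baseChangeForms tF E s) = baseChangeForms2 tF E (nt.nabla1 s) := by
    intro s
    induction s using TensorProduct.induction_on with
    | zero => simp
    | tmul e ω =>
        rw [bc1_tmul, Conn2.nabla1_tmul, Conn2.nabla1_tmul, hnab, hC1, hLw,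
          ← tF.comm_d1, ← bc2_tmul, map_add]
    | add x y hx hy => rw [map_add, map_add, hx, hy, map_add, map_add]
  have hvan : ∀ (w : Wdag) (s : E ⊗[Bdag] DΩ.Ω1),
      LinearMap.lTensor (Wdag ⊗[Bdag] E) (DW.wedge (DW.d0 w)) (baseChangeForms tF E s)
        + LinearMap.lTensor (Wdag ⊗[Bdag] E) (DW.wedge.flip (DW.d0 w))
            (baseChangeForms tF E s) = 0 := by
    intro w s
    induction s using TensorProduct.induction_on with
    | zero => simp
    | tmul e ω =>
        rw [bc1_tmul, LinearMap.lTensor_tmul, LinearMap.lTensor_tmul,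
          LinearMap.flip_apply, ← TensorProduct.tmul_add, hK w _ (hmem ω),
          TensorProduct.tmul_zero]
    | add x y hx hy =>
        rw [map_add, map_add, map_add, add_add_add_comm, hx, hy, add_zero]
  refine ⟨C, fun w e => by rw [hnab]; exact nab_tmul w e, ?_⟩
  intro x
  induction x using TensorProduct.induction_on with
  | zero => rw [map_zero, map_zero]
  | tmul w e =>
      rw [hnab, nab_tmul, map_add, hn1smul, hL3, hint e, map_zero, smul_zero,
        zero_add, Conn2.nabla1_tmul, hnab, hC1, DW.d1_d0, TensorProduct.tmul_zero,
        add_zero, hvan]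
  | add x y hx hy =>
      rw [map_add, map_add, hx, hy, add_zero]
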